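/- Let 0 < c₁ ≤ c₂ and δ > 0 be real numbers. Then there exists a constant B > 0 such that for every z ∈ ℂ with 0 < |z| ≤ δ and every measurable function r : [−δ, δ] → ℝ satisfying √(c₁|z|² + t²) ≤ r(t) ≤ √(c₂|z|² + t²) for all t ∈ [−δ, δ], one has |∫_{−δ}^{δ} (1/r(t)) dt + ln(|z|²)| ≤ B. -/

import Mathlib

open Real MeasureTheory intervalIntegral

lemma sqrt_quad_eq (s t : ℝ) (hs : 0 < s) :
    Real.sqrt (s ^ 2 + t ^ 2) = s * Real.sqrt (1 + (t / s) ^ 2) := by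
  rw [← Real.sqrt_sq hs.le, ← Real.sqrt_mul (by positivity)]
  congr 1
  field_simp
  exact Real.sq_sqrt (by positivity)

lemma integ_aux (s δ : ℝ) (hs : 0 < s) :
    ∫ t in (-δ)..δ, 1 / Real.sqrt (s ^ 2 + t ^ 2) = 2 * Real.arsinh (δ / s) := by
  have hne : ∀ t : ℝ, Real.sqrt (s ^ 2 + t ^ 2) ≠ 0 := by
    intro t
    have : (0:ℝ) < s ^ 2 + t ^ 2 := by positivity
    positivity
  have hderiv : ∀ t ∈ Set.uIcc (-δ) δ,
      HasDerivAt (fun u => Real.arsinh (u / s)) (1 / Real.sqrt (s ^ 2 + t ^ 2)) t := by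
    intro t _
    have h1 : HasDerivAt (fun u : ℝ => u / s) (1 / s) t := by
      simpa using (hasDerivAt_id t).div_const s
    have h2 := h1.arsinh
    convert h2 using 1
    rw [sqrt_quad_eq s t hs]
    have h3 : Real.sqrt (1 + (t / s) ^ 2) ≠ 0 := by
      have : (0:ℝ) < 1 + (t/s)^2 := by positivity
      positivity
    simp only [smul_eq_mul]
    ring
  have hint : IntervalIntegrable (fun t => 1 / Real.sqrt (s ^ 2 + t ^ 2)) volume (-δ) δ := by
    apply Continuous.intervalIntegrable
    exact continuous_const.div (by fun_prop) hne
  rw [intervalIntegral.integral_eq_sub_of_hasDerivAt hderiv hint]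
  rw [neg_div, Real.arsinh_neg]
  ring

lemma arsinh_eq_log_add (x : ℝ) (hx : 0 < x) :
    Real.arsinh x = Real.log x + Real.log (1 + Real.sqrt (1 + x⁻¹ ^ 2)) := by
  have h1 : x * Real.sqrt (1 + x⁻¹ ^ 2) = Real.sqrt (1 + x ^ 2) := by
    rw [← Real.sqrt_sq hx.le, ← Real.sqrt_mul (by positivity)]
    congr 1
    field_simp
    rw [Real.sqrt_sq hx.le]
    ring
  have h2 : (0:ℝ) < 1 + Real.sqrt (1 + x⁻¹ ^ 2) := by positivity
  rw [← Real.log_mul hx.ne' h2.ne']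
  unfold Real.arsinh
  rw [mul_add, mul_one, h1, add_comm (1:ℝ) (x^2)]

theorem stmt0 (c₁ c₂ δ : ℝ) (hc₁ : 0 < c₁) (hc : c₁ ≤ c₂) (hδ : 0 < δ) :
    ∃ B > (0 : ℝ), ∀ z : ℂ, 0 < ‖z‖ → ‖z‖ ≤ δ →
      ∀ r : ℝ → ℝ,
        AEMeasurable r (MeasureTheory.volume.restrict (Set.Icc (-δ) δ)) →
        (∀ t ∈ Set.Icc (-δ) δ,
          Real.sqrt (c₁ * ‖z‖ ^ 2 + t ^ 2) ≤ r t ∧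
          r t ≤ Real.sqrt (c₂ * ‖z‖ ^ 2 + t ^ 2)) →
        |(∫ t in (-δ)..δ, 1 / r t) + Real.log (‖z‖ ^ 2)| ≤ B := by
  have hc₂ : 0 < c₂ := hc₁.trans_le hc
  set K : ℝ := Real.log (1 + Real.sqrt (1 + c₂)) with hK
  have hK0 : 0 ≤ K := Real.log_nonneg (by nlinarith [Real.sqrt_nonneg (1 + c₂)])
  refine ⟨2 * |Real.log δ| + |Real.log c₁| + |Real.log c₂| + 2 * K + 1, by positivity, ?_⟩
  intro z ha haδ r hmeas hpinch
  set a := ‖z‖ with haa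
  -- key facts
  have hs₁ : (0:ℝ) < Real.sqrt c₁ * a := by positivity
  have hs₂ : (0:ℝ) < Real.sqrt c₂ * a := by positivity
  have hca : ∀ c : ℝ, 0 < c → ∀ t : ℝ, c * a ^ 2 + t ^ 2 = (Real.sqrt c * a) ^ 2 + t ^ 2 := by
    intro c hcc t
    rw [mul_pow, Real.sq_sqrt hcc.le]
  -- integrability of 1/r
  have hrpos : ∀ t ∈ Set.Icc (-δ) δ, 0 < r t := fun t ht =>
    lt_of_lt_of_le (by rw [hca c₁ hc₁ t]; positivity) (hpinch t ht).1
  have hint_r : IntervalIntegrable (fun t => 1 / r t) volume (-δ) δ := by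
    rw [intervalIntegrable_iff_integrableOn_Icc_of_le (by linarith)]
    apply MeasureTheory.Integrable.mono' (g := fun _ => 1 / (Real.sqrt c₁ * a))
      (MeasureTheory.integrable_const _)
    · exact (hmeas.inv).aestronglyMeasurable.congr (by
        filter_upwards with t using by simp [one_div])
    · rw [MeasureTheory.ae_restrict_iff' measurableSet_Icc]
      filter_upwards with t ht
      have h1 := (hpinch t ht).1
      have h2 : Real.sqrt c₁ * a ≤ r t := by
        refine le_trans ?_ h1
        have h3 := Real.sqrt_le_sqrt (show (Real.sqrt c₁ * a) ^ 2 ≤ c₁ * a ^ 2 + t ^ 2 by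
          rw [hca c₁ hc₁ t]; nlinarith)
        rwa [Real.sqrt_sq hs₁.le] at h3
      rw [Real.norm_eq_abs, abs_of_pos (one_div_pos.mpr (hrpos t ht))]
      exact one_div_le_one_div_of_le hs₁ h2
  -- integrability of the bounds
  have hintb : ∀ c : ℝ, 0 < c →
      IntervalIntegrable (fun t => 1 / Real.sqrt (c * a ^ 2 + t ^ 2)) volume (-δ) δ := by
    intro c hcc
    apply Continuous.intervalIntegrable
    refine continuous_const.div (by fun_prop) fun t => ?_
    have : (0:ℝ) < c * a ^ 2 + t ^ 2 := by positivity
    positivity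
  -- comparison
  have hle : ∀ t ∈ Set.Icc (-δ) δ, 1 / r t ≤ 1 / Real.sqrt (c₁ * a ^ 2 + t ^ 2) := by
    intro t ht
    apply one_div_le_one_div_of_le (by rw [hca c₁ hc₁ t]; positivity) (hpinch t ht).1
  have hge : ∀ t ∈ Set.Icc (-δ) δ, 1 / Real.sqrt (c₂ * a ^ 2 + t ^ 2) ≤ 1 / r t := by
    intro t ht
    exact one_div_le_one_div_of_le (hrpos t ht) (hpinch t ht).2
  have hIle : (∫ t in (-δ)..δ, 1 / r t) ≤ ∫ t in (-δ)..δ, 1 / Real.sqrt (c₁ * a ^ 2 + t ^ 2) :=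
    intervalIntegral.integral_mono_on (by linarith) hint_r (hintb c₁ hc₁) hle
  have hIge : (∫ t in (-δ)..δ, 1 / Real.sqrt (c₂ * a ^ 2 + t ^ 2)) ≤ ∫ t in (-δ)..δ, 1 / r t :=
    intervalIntegral.integral_mono_on (by linarith) (hintb c₂ hc₂) hint_r hge
  -- compute bound integrals
  have hval : ∀ c : ℝ, 0 < c →
      (∫ t in (-δ)..δ, 1 / Real.sqrt (c * a ^ 2 + t ^ 2))
        = 2 * Real.arsinh (δ / (Real.sqrt c * a)) := by
    intro c hcc
    rw [show (fun t => 1 / Real.sqrt (c * a ^ 2 + t ^ 2))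
        = fun t => 1 / Real.sqrt ((Real.sqrt c * a) ^ 2 + t ^ 2) from
      funext fun t => by rw [hca c hcc t]]
    exact integ_aux _ δ (by positivity)
  -- arsinh estimates
  have hbound : ∀ c : ℝ, 0 < c → c ≤ c₂ →
      2 * Real.arsinh (δ / (Real.sqrt c * a)) + Real.log (a ^ 2)
        = 2 * Real.log (1 + Real.sqrt (1 + ((δ / (Real.sqrt c * a))⁻¹) ^ 2))
          + 2 * Real.log δ - Real.log c := by
    intro c hcc hcle
    have hsc : (0:ℝ) < Real.sqrt c * a := by positivity
    have hx : (0:ℝ) < δ / (Real.sqrt c * a) := by positivity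
    rw [arsinh_eq_log_add _ hx, Real.log_div hδ.ne' hsc.ne',
      Real.log_mul (Real.sqrt_pos.mpr hcc).ne' ha.ne', Real.log_sqrt hcc.le,
      Real.log_pow]
    push_cast
    ring
  have heps : ∀ c : ℝ, 0 < c → c ≤ c₂ →
      0 ≤ Real.log (1 + Real.sqrt (1 + ((δ / (Real.sqrt c * a))⁻¹) ^ 2)) ∧
      Real.log (1 + Real.sqrt (1 + ((δ / (Real.sqrt c * a))⁻¹) ^ 2)) ≤ K := by
    intro c hcc hcle
    constructor
    · exact Real.log_nonneg (by nlinarith [Real.sqrt_nonneg (1 + ((δ / (Real.sqrt c * a))⁻¹) ^ 2)])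
    · apply Real.log_le_log (by positivity)
      have hxi : (δ / (Real.sqrt c * a))⁻¹ = Real.sqrt c * a / δ := by
        rw [inv_div]
      have h1 : ((δ / (Real.sqrt c * a))⁻¹) ^ 2 ≤ c₂ := by
        rw [hxi, div_pow, mul_pow, Real.sq_sqrt hcc.le]
        rw [div_le_iff₀ (by positivity)]
        nlinarith [mul_le_mul hcle (show a ^ 2 ≤ δ ^ 2 by nlinarith) (by positivity) hc₂.le]
      have := Real.sqrt_le_sqrt (show 1 + ((δ / (Real.sqrt c * a))⁻¹) ^ 2 ≤ 1 + c₂ by linarith)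
      linarith
  -- combine
  have hup : (∫ t in (-δ)..δ, 1 / r t) + Real.log (a ^ 2)
      ≤ 2 * K + 2 * Real.log δ - Real.log c₁ := by
    have h1 := hval c₁ hc₁
    have h2 := hbound c₁ hc₁ hc
    have h3 := (heps c₁ hc₁ hc).2
    linarith [hIle]
  have hlo : 2 * Real.log δ - Real.log c₂
      ≤ (∫ t in (-δ)..δ, 1 / r t) + Real.log (a ^ 2) := by
    have h1 := hval c₂ hc₂
    have h2 := hbound c₂ hc₂ le_rfl
    have h3 := (heps c₂ hc₂ le_rfl).1
    linarith [hIge]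
  rw [abs_le]
  constructor
  · have := le_abs_self (Real.log δ)
    have h2 := neg_abs_le (Real.log δ)
    have h3 := le_abs_self (Real.log c₂)
    have h4 := abs_nonneg (Real.log c₁)
    linarith
  · have := le_abs_self (Real.log δ)
    have h3 := neg_abs_le (Real.log c₁)
    have h4 := abs_nonneg (Real.log c₂)
    linarith
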